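/- Let B ⊆ C_ℝ be closed under truncation, let A ∈ ℝ, and let Q^1,…,Q^N be probability measures on (Ω, 𝓕) absolutely continuous with respect to P such that Σ_{n=1}^N E_{Q^n}[W^n] ≤ c_W for every bounded W ∈ B, where c_W ∈ ℝ denotes the constant with Σ_{n=1}^N W^n = c_W P-a.s. Then every Y ∈ B with Y^n ∈ L^1(Q^n) for every n and Σ_{n=1}^N Y^n ≤ A P-a.s. satisfies Σ_{n=1}^N E_{Q^n}[Y^n] ≤ A. -/
import Mathlib


open MeasureTheory

/-- Lemma 4.14: if `B ⊆ C_ℝ` is closed under truncation and the pricing vector `Q`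
    satisfies `Σₙ E_{Q^n}[W^n] ≤ c_W` for every bounded `W ∈ B`, then every `Y ∈ B`
    with `Y^n ∈ L¹(Q^n)` and `Σₙ Y^n ≤ A` a.s. satisfies `Σₙ E_{Q^n}[Y^n] ≤ A`. -/
theorem truncation_closed_price_bound
    {Ω : Type*} [MeasurableSpace Ω] (P : Measure Ω) [IsProbabilityMeasure P]
    (N : ℕ) (hN : 1 ≤ N) (A : ℝ)
    (B : Set (Fin N → Ω → ℝ))
    -- elements of `B` are (vectors of) random variables
    (hBmeas : ∀ Y ∈ B, ∀ n, AEStronglyMeasurable (Y n) P)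
    -- `B ⊆ C_ℝ`
    (hBCR : ∀ Y ∈ B, ∃ c : ℝ, ∀ᵐ ω ∂P, ∑ n, Y n ω = c)
    -- `B` is closed under truncation
    (hBtrunc : ∀ Y ∈ B, ∀ cY : ℝ, (∀ᵐ ω ∂P, ∑ n, Y n ω = cY) →
      ∃ (mY : ℕ) (c : Fin N → ℝ), (∑ n, c n) = cY ∧ ∀ m : ℕ, mY ≤ m →
        (fun n ω => if ∀ k, |Y k ω| < (m : ℝ) then Y n ω else c n) ∈ B)
    (Q : Fin N → Measure Ω) [∀ n, IsProbabilityMeasure (Q n)]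
    (hQP : ∀ n, Q n ≪ P)
    -- the price bound holds for every bounded element of `B`
    (hpolar : ∀ W ∈ B, ∀ C : ℝ, (∀ n ω, |W n ω| ≤ C) → ∀ cW : ℝ,
      (∀ᵐ ω ∂P, ∑ n, W n ω = cW) → ∑ n, ∫ ω, W n ω ∂(Q n) ≤ cW)
    (Y : Fin N → Ω → ℝ) (hY : Y ∈ B)
    (hYint : ∀ n, Integrable (Y n) (Q n))
    (hYA : ∀ᵐ ω ∂P, ∑ n, Y n ω ≤ A) :
    ∑ n, ∫ ω, Y n ω ∂(Q n) ≤ A := by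
  classical
  obtain ⟨cY, hcY⟩ := hBCR Y hY
  obtain ⟨ω₀, hω₁, hω₂⟩ := (hcY.and hYA).exists
  have hcYA : cY ≤ A := hω₁ ▸ hω₂
  obtain ⟨mY, c, hcsum, htrunc⟩ := hBtrunc Y hY cY hcY
  set Ym : ℕ → Fin N → Ω → ℝ :=
    fun m n ω => if ∀ k, |Y k ω| < (m : ℝ) then Y n ω else c n with hYmdef
  -- the price bound for each truncation
  have key : ∀ m, mY ≤ m → ∑ n, ∫ ω, Ym m n ω ∂(Q n) ≤ cY := by
    intro m hm
    refine hpolar _ (htrunc m hm) ((m : ℝ) + ∑ n, |c n|) ?_ cY ?_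
    · intro n ω
      by_cases hp : ∀ k, |Y k ω| < (m : ℝ)
      · simp only [Ym, if_pos hp]
        have h1 : |Y n ω| ≤ (m : ℝ) := (hp n).le
        have h2 : (0:ℝ) ≤ ∑ n, |c n| := Finset.sum_nonneg fun i _ => abs_nonneg _
        linarith
      · simp only [Ym, if_neg hp]
        have h1 : |c n| ≤ ∑ n, |c n| :=
          Finset.single_le_sum (fun i _ => abs_nonneg (c i)) (Finset.mem_univ n)
        have h2 : (0:ℝ) ≤ (m:ℝ) := Nat.cast_nonneg m
        linarith
    · filter_upwards [hcY] with ω hω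
      by_cases hp : ∀ k, |Y k ω| < (m : ℝ)
      · simp only [Ym, if_pos hp]; exact hω
      · simp only [Ym, if_neg hp]; exact hcsum
  -- convergence of each integral
  have hlim : ∀ n, Filter.Tendsto (fun j : ℕ => ∫ ω, Ym (mY + j) n ω ∂(Q n))
      Filter.atTop (nhds (∫ ω, Y n ω ∂(Q n))) := by
    intro n
    refine MeasureTheory.tendsto_integral_of_dominated_convergence
      (fun ω => |Y n ω| + |c n|) ?_ ?_ ?_ ?_
    · intro j
      exact (hBmeas _ (htrunc (mY + j) (Nat.le_add_right _ _)) n).mono_ac (hQP n)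
    · exact (hYint n).abs.add (integrable_const _)
    · intro j
      refine Filter.Eventually.of_forall fun ω => ?_
      by_cases hp : ∀ k, |Y k ω| < ((mY + j : ℕ) : ℝ)
      · simp only [Ym, if_pos hp, Real.norm_eq_abs]
        have := abs_nonneg (c n); linarith
      · simp only [Ym, if_neg hp, Real.norm_eq_abs]
        have := abs_nonneg (Y n ω); linarith
    · refine Filter.Eventually.of_forall fun ω => ?_
      obtain ⟨M, hM⟩ := exists_nat_gt (∑ k, |Y k ω|)
      refine Filter.Tendsto.congr' ?_ tendsto_const_nhds
      rw [Filter.EventuallyEq, Filter.eventually_atTop]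
      refine ⟨M, fun j hj => ?_⟩
      have hp : ∀ k, |Y k ω| < ((mY + j : ℕ) : ℝ) := by
        intro k
        have h1 : |Y k ω| ≤ ∑ i, |Y i ω| :=
          Finset.single_le_sum (fun i _ => abs_nonneg (Y i ω)) (Finset.mem_univ k)
        have h2 : (M : ℝ) ≤ ((mY + j : ℕ) : ℝ) := by
          exact_mod_cast Nat.le_add_left M mY |>.trans (Nat.add_le_add_left hj mY)
        linarith
      simp only [Ym, if_pos hp]
  -- conclude
  have hsum : Filter.Tendsto (fun j : ℕ => ∑ n, ∫ ω, Ym (mY + j) n ω ∂(Q n))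
      Filter.atTop (nhds (∑ n, ∫ ω, Y n ω ∂(Q n))) :=
    tendsto_finset_sum _ fun n _ => hlim n
  have hle : ∑ n, ∫ ω, Y n ω ∂(Q n) ≤ cY :=
    le_of_tendsto hsum (Filter.Eventually.of_forall fun j => key _ (Nat.le_add_right _ _))
  linarith
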